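/- (van der Corput second derivative exponential sum bound) Let a < b be integers and let f be twice differentiable on [a,b] with |f''(x)| ≥ ρ > 0 for all x ∈ [a,b] and f'' of constant sign. Then | Σ_{l=a}^{b} e^{2πi f(l)} | ≤ (|f'(b) − f'(a)| + 2) (4/√ρ + 3). -/

import Mathlib

open Real

noncomputable def ee (x : ℝ) : ℂ := Complex.exp (2 * (π : ℂ) * Complex.I * (x : ℂ))

lemma ee_factor (φ : ℝ) :
    ee φ - 1 = 2 * (Real.sin (π*φ) : ℂ) * Complex.I * ((Real.cos (π*φ) : ℂ) + (Real.sin (π*φ) : ℂ) * Complex.I) := by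
  have h1 : ee φ = ((Real.cos (π*φ) : ℂ) + (Real.sin (π*φ) : ℂ) * Complex.I)^2 := by
    rw [ee, show (2 * (π : ℂ) * Complex.I * (φ : ℂ)) = ((π * φ : ℝ) : ℂ) * Complex.I + ((π * φ : ℝ) : ℂ) * Complex.I by push_cast; ring,
      Complex.exp_add, Complex.exp_mul_I, ← sq]
    norm_cast
  have h2 : (Real.cos (π*φ) : ℂ)^2 + (Real.sin (π*φ) : ℂ)^2 = 1 := by
    norm_cast; exact Real.cos_sq_add_sin_sq _
  rw [h1]
  linear_combination h2 - ((Real.sin (π*φ) : ℂ))^2 * Complex.I_sq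

lemma abs_ee_sub_one (φ : ℝ) : ‖ee φ - 1‖ = 2 * |Real.sin (π*φ)| := by
  rw [ee_factor]
  have h2 : ‖(Real.cos (π*φ) : ℂ) + (Real.sin (π*φ) : ℂ) * Complex.I‖ = 1 := by
    rw [Complex.norm_def, Complex.normSq_add_mul_I, Real.cos_sq_add_sin_sq, Real.sqrt_one]
  rw [norm_mul, norm_mul, norm_mul, h2, Complex.norm_I, Complex.norm_two, Complex.norm_real, Real.norm_eq_abs]
  ring

lemma inv_ee_sub_one (φ : ℝ) (hs : Real.sin (π*φ) ≠ 0) :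
    (ee φ - 1)⁻¹ = -1/2 + ((-Real.cos (π*φ) / (2 * Real.sin (π*φ)) : ℝ) : ℂ) * Complex.I := by
  have h2 : (Real.cos (π*φ) : ℂ)^2 + (Real.sin (π*φ) : ℂ)^2 = 1 := by
    norm_cast; exact Real.cos_sq_add_sin_sq _
  have hs' : (Real.sin (π*φ) : ℂ) ≠ 0 := by exact_mod_cast hs
  apply inv_eq_of_mul_eq_one_right
  rw [ee_factor]
  rw [show ((-Real.cos (π*φ) / (2 * Real.sin (π*φ)) : ℝ) : ℂ) = -(Real.cos (π*φ):ℂ) / (2 * (Real.sin (π*φ):ℂ)) by push_cast; ring]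
  generalize (Real.cos (π*φ) : ℂ) = c at h2 ⊢
  generalize (Real.sin (π*φ) : ℂ) = s at h2 hs' ⊢
  field_simp
  linear_combination h2 + (-(c^2+s^2) - Complex.I*c*s) * Complex.I_sq

lemma sin_lb {δ x : ℝ} (hδ0 : 0 < δ) (hx1 : π*δ ≤ x) (hx2 : x ≤ π*(1-δ)) :
    Real.sin (π*δ) ≤ Real.sin x := by
  have hπ := Real.pi_pos
  have hδπ : 0 < π * δ := by positivity
  rcases le_or_gt x (π/2) with h | h
  · exact Real.sin_le_sin_of_le_of_le_pi_div_two (by linarith) h hx1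
  · rw [← Real.sin_pi_sub x]
    exact Real.sin_le_sin_of_le_of_le_pi_div_two (by linarith) (by linarith) (by linarith)

lemma cos_ub {δ x : ℝ} (hδ0 : 0 < δ) (hδ1 : δ ≤ 1/2) (hx1 : π*δ ≤ x) (hx2 : x ≤ π*(1-δ)) :
    |Real.cos x| ≤ Real.cos (π*δ) := by
  have hπ := Real.pi_pos
  rw [abs_le]
  constructor
  · have : Real.cos (π*(1-δ)) ≤ Real.cos x :=
      Real.cos_le_cos_of_nonneg_of_le_pi (by nlinarith) (by nlinarith) hx2
    have h2 : Real.cos (π*(1-δ)) = -Real.cos (π*δ) := by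
      rw [show π*(1-δ) = π - π*δ by ring, Real.cos_pi_sub]
    linarith
  · exact Real.cos_le_cos_of_nonneg_of_le_pi (by positivity) (by nlinarith) hx1

lemma neg_cot_mono {x y : ℝ} (hx : 0 < x) (hxy : x ≤ y) (hy : y < π) :
    -Real.cos x / Real.sin x ≤ -Real.cos y / Real.sin y := by
  have hsx : 0 < Real.sin x := Real.sin_pos_of_pos_of_lt_pi hx (lt_of_le_of_lt hxy hy)
  have hsy : 0 < Real.sin y := Real.sin_pos_of_pos_of_lt_pi (lt_of_lt_of_le hx hxy) hy
  rw [div_le_div_iff₀ hsx hsy]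
  have h : 0 ≤ Real.sin (y - x) := Real.sin_nonneg_of_nonneg_of_le_pi (by linarith) (by linarith)
  rw [Real.sin_sub] at h
  nlinarith

lemma cot_half_bound {δ : ℝ} (hδ0 : 0 < δ) (hδ1 : δ ≤ 1/2) :
    (1 + Real.cos (π*δ)) / Real.sin (π*δ) ≤ 2/(π*δ) := by
  have hπ := Real.pi_pos
  have h2 : π*δ/2 < π/2 := by nlinarith
  have h1 : 0 < π*δ/2 := by positivity
  have htan := Real.lt_tan h1 h2
  rw [Real.tan_eq_sin_div_cos] at htan
  have hc : 0 < Real.cos (π*δ/2) := Real.cos_pos_of_mem_Ioo ⟨by linarith, h2⟩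
  have hs : 0 < Real.sin (π*δ/2) := Real.sin_pos_of_pos_of_lt_pi h1 (by linarith)
  have hcos : Real.cos (π*δ) = 2 * Real.cos (π*δ/2)^2 - 1 := by
    have h := Real.cos_two_mul (π*δ/2); rw [show 2*(π*δ/2) = π*δ by ring] at h; exact h
  have hsin : Real.sin (π*δ) = 2 * Real.sin (π*δ/2) * Real.cos (π*δ/2) := by
    have h := Real.sin_two_mul (π*δ/2); rw [show 2*(π*δ/2) = π*δ by ring] at h; exact h
  rw [hcos, hsin]
  rw [div_le_div_iff₀ (by positivity) (by positivity)]
  have key : π*δ/2 * Real.cos (π*δ/2) ≤ Real.sin (π*δ/2) := by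
    rw [lt_div_iff₀ hc] at htan
    linarith
  nlinarith [sq_nonneg (Real.cos (π*δ/2))]

lemma sum_shift (g : ℤ → ℂ) (a b : ℤ) :
    ∑ l ∈ Finset.Icc (a+1) b, g l = ∑ l ∈ Finset.Icc a (b-1), g (l+1) := by
  have h : Finset.Icc (a+1) b = Finset.map (addRightEmbedding 1) (Finset.Icc a (b-1)) := by
    rw [Finset.map_add_right_Icc]; congr 1; omega
  rw [h, Finset.sum_map]
  simp [addRightEmbedding]

lemma Icc_succ_top' {a b : ℤ} (h : a ≤ b + 1) :
    Finset.Icc a (b+1) = insert (b+1) (Finset.Icc a b) := by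
  ext x
  simp only [Finset.mem_Icc, Finset.mem_insert]
  omega

lemma sum_Icc_succ_top' {M : Type*} [AddCommMonoid M] {a b : ℤ} (h : a ≤ b + 1) (g : ℤ → M) :
    ∑ l ∈ Finset.Icc a (b+1), g l = (∑ l ∈ Finset.Icc a b, g l) + g (b+1) := by
  rw [Icc_succ_top' h, Finset.sum_insert (by simp), add_comm]

lemma sum_telescope_Icc (g : ℤ → ℝ) (a b : ℤ) (hab : a ≤ b) :
    ∑ l ∈ Finset.Icc (a+1) b, (g l - g (l-1)) = g b - g a := by
  refine Int.le_induction (motive := fun b _ => ∑ l ∈ Finset.Icc (a+1) b, (g l - g (l-1)) = g b - g a) ?_ ?_ b hab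
  · simp
  · intro n hn ih
    rw [sum_Icc_succ_top' (by omega), ih]
    simp

lemma split_sum (a b c : ℤ) (h1 : a - 1 ≤ c) (h2 : c ≤ b) (g : ℤ → ℂ) :
    ∑ l ∈ Finset.Icc a b, g l = (∑ l ∈ Finset.Icc a c, g l) + ∑ l ∈ Finset.Icc (c+1) b, g l := by
  have e1 : Finset.Icc a b = Finset.Ioc (a-1) b := by ext x; simp
  have e2 : Finset.Icc a c = Finset.Ioc (a-1) c := by ext x; simp
  have e3 : Finset.Icc (c+1) b = Finset.Ioc c b := by ext x; simp
  rw [e1, e2, e3, ← Finset.sum_union (by rw [Finset.disjoint_left]; intro x hx1 hx2; simp only [Finset.mem_Ioc] at hx1 hx2; omega),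
    Finset.Ioc_union_Ioc_eq_Ioc h1 h2]

lemma split_run (a b : ℤ) (hab : a - 1 ≤ b) (P : ℤ → Prop) [DecidablePred P]
    (hdc : ∀ l l' : ℤ, a ≤ l → l ≤ l' → l' ≤ b → P l' → P l) :
    ∃ c, a - 1 ≤ c ∧ c ≤ b ∧ (∀ l, a ≤ l → l ≤ c → P l) ∧ (∀ l, c < l → l ≤ b → ¬ P l) := by
  classical
  by_cases hne : ((Finset.Icc a b).filter P).Nonempty
  · obtain ⟨m, hmmem, hmax⟩ := Finset.exists_max_image ((Finset.Icc a b).filter P) id hne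
    rw [Finset.mem_filter, Finset.mem_Icc] at hmmem
    refine ⟨m, by omega, hmmem.1.2, ?_, ?_⟩
    · intro l hl1 hl2
      exact hdc l m hl1 hl2 hmmem.1.2 hmmem.2
    · intro l hl1 hl2 hPl
      have hmem : l ∈ (Finset.Icc a b).filter P := by
        rw [Finset.mem_filter, Finset.mem_Icc]; exact ⟨⟨by omega, hl2⟩, hPl⟩
      have := hmax l hmem
      simp only [id] at this
      omega
  · refine ⟨a - 1, le_refl _, hab, fun l h1 h2 => absurd h2 (by omega), fun l h1 h2 hP => ?_⟩
    exact hne ⟨l, by rw [Finset.mem_filter, Finset.mem_Icc]; exact ⟨⟨by omega, h2⟩, hP⟩⟩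
lemma ee_add (x y : ℝ) : ee (x + y) = ee x * ee y := by
  rw [ee, ee, ee, ← Complex.exp_add]; congr 1; push_cast; ring

lemma ee_int (m : ℤ) : ee m = 1 := by
  rw [ee, show 2*(π:ℂ)*Complex.I*((m:ℝ):ℂ) = (m:ℤ) * (2*π*Complex.I) by push_cast; ring]
  exact Complex.exp_int_mul_two_pi_mul_I m

lemma abs_ee (x : ℝ) : ‖ee x‖ = 1 := by
  rw [ee, Complex.norm_exp]
  simp [Complex.mul_re, Complex.mul_im]

lemma ee_ne_one {φ : ℝ} (h : Real.sin (π*φ) ≠ 0) : ee φ - 1 ≠ 0 := by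
  intro hc
  have := abs_ee_sub_one φ
  rw [hc] at this
  simp at this
  exact h this
lemma kusminLandau (a b : ℤ) (hab : a ≤ b) (f f' : ℝ → ℝ) (δ : ℝ) (hδ0 : 0 < δ) (hδ1 : δ ≤ 1/2)
    (hd1 : ∀ x ∈ Set.Icc (a:ℝ) b, HasDerivAt f (f' x) x)
    (hmono : MonotoneOn f' (Set.Icc (a:ℝ) b))
    (m : ℤ) (hrange : ∀ x ∈ Set.Icc (a:ℝ) b, f' x ∈ Set.Icc ((m:ℝ) + δ) ((m:ℝ) + 1 - δ)) :
    ‖∑ l ∈ Finset.Icc a b, ee (f l)‖ ≤ 1 + (1 + Real.cos (π*δ)) / Real.sin (π*δ) := by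
  have hπ := Real.pi_pos
  have hsδ : 0 < Real.sin (π*δ) := Real.sin_pos_of_pos_of_lt_pi (by positivity) (by nlinarith)
  have hcδ : 0 ≤ Real.cos (π*δ) := Real.cos_nonneg_of_mem_Icc ⟨by nlinarith, by nlinarith⟩
  rcases eq_or_lt_of_le hab with rfl | hlt
  · rw [Finset.Icc_self, Finset.sum_singleton, abs_ee]
    have : 0 ≤ (1 + Real.cos (π*δ)) / Real.sin (π*δ) := by positivity
    linarith
  -- a < b
  set φ : ℤ → ℝ := fun l => f (l+1) - f l - m with hφdef
  -- MVT
  have slope : ∀ l : ℤ, a ≤ l → l ≤ b - 1 → ∃ ξ ∈ Set.Ioo (l:ℝ) (l+1), f' ξ = f (l+1) - f l := by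
    intro l h1 h2
    have hsub : Set.Icc (l:ℝ) (l+1) ⊆ Set.Icc (a:ℝ) b := by
      apply Set.Icc_subset_Icc
      · exact_mod_cast h1
      · have : (l:ℝ) + 1 ≤ b := by exact_mod_cast (by omega : l + 1 ≤ b)
        linarith
    obtain ⟨ξ, hξ, hξ2⟩ := exists_hasDerivAt_eq_slope f f' (by linarith : (l:ℝ) < l+1)
      (fun x hx => (hd1 x (hsub hx)).continuousAt.continuousWithinAt)
      (fun x hx => hd1 x (hsub (Set.mem_Icc_of_Ioo hx)))
    refine ⟨ξ, hξ, ?_⟩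
    rw [hξ2]
    field_simp
    ring
  have hξmem : ∀ l : ℤ, a ≤ l → l ≤ b - 1 → ∀ ξ ∈ Set.Ioo (l:ℝ) (l+1), ξ ∈ Set.Icc (a:ℝ) b := by
    intro l h1 h2 ξ hξ
    constructor
    · have : (a:ℝ) ≤ l := by exact_mod_cast h1
      linarith [hξ.1]
    · have : (l:ℝ) + 1 ≤ b := by exact_mod_cast (by omega : l + 1 ≤ b)
      linarith [hξ.2]
  have hφbound : ∀ l : ℤ, a ≤ l → l ≤ b - 1 → δ ≤ φ l ∧ φ l ≤ 1 - δ := by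
    intro l h1 h2
    obtain ⟨ξ, hξ, hξ2⟩ := slope l h1 h2
    have hm := hrange ξ (hξmem l h1 h2 ξ hξ)
    have : φ l = f' ξ - m := by rw [hφdef]; simp [hξ2]
    rw [this]
    exact ⟨by linarith [hm.1], by linarith [hm.2]⟩
  have hφmono : ∀ l : ℤ, a + 1 ≤ l → l ≤ b - 1 → φ (l-1) ≤ φ l := by
    intro l h1 h2
    obtain ⟨ξ₁, hξ₁, he₁⟩ := slope (l-1) (by omega) (by omega)
    obtain ⟨ξ₂, hξ₂, he₂⟩ := slope l (by omega) h2
    have hlt : ξ₁ ≤ ξ₂ := by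
      push_cast at hξ₁ hξ₂
      linarith [hξ₁.2, hξ₂.1]
    have := hmono (hξmem (l-1) (by omega) (by omega) ξ₁ hξ₁) (hξmem l (by omega) h2 ξ₂ hξ₂) hlt
    have e1 : φ (l-1) = f' ξ₁ - m := by simp only [hφdef]; rw [← he₁]
    have e2 : φ l = f' ξ₂ - m := by rw [hφdef]; simp [he₂]
    rw [e1, e2]
    linarith
  -- basic per-l facts
  set t : ℤ → ℝ := fun l => -Real.cos (π * φ l) / (2 * Real.sin (π * φ l)) with ht
  set W : ℤ → ℂ := fun l => (ee (φ l) - 1)⁻¹ with hW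
  have hrangeφ : ∀ l : ℤ, a ≤ l → l ≤ b - 1 → π*δ ≤ π * φ l ∧ π * φ l ≤ π*(1-δ) := by
    intro l h1 h2
    obtain ⟨u, v⟩ := hφbound l h1 h2
    constructor <;> nlinarith
  have hsφ : ∀ l : ℤ, a ≤ l → l ≤ b - 1 → Real.sin (π*δ) ≤ Real.sin (π * φ l) := by
    intro l h1 h2
    obtain ⟨u, v⟩ := hrangeφ l h1 h2
    exact sin_lb hδ0 u v
  have hWval : ∀ l : ℤ, a ≤ l → l ≤ b - 1 → W l = -1/2 + ((t l : ℝ) : ℂ) * Complex.I := by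
    intro l h1 h2
    rw [hW]
    exact inv_ee_sub_one (φ l) (by linarith [hsφ l h1 h2])
  have hWabs : ∀ l : ℤ, a ≤ l → l ≤ b - 1 → ‖W l‖ ≤ 1 / (2 * Real.sin (π*δ)) := by
    intro l h1 h2
    rw [hW]
    simp only [norm_inv]
    rw [abs_ee_sub_one]
    have h3 := hsφ l h1 h2
    rw [abs_of_pos (by linarith), inv_eq_one_div]
    apply one_div_le_one_div_of_le (by positivity) (by linarith)
  have htabs : ∀ l : ℤ, a ≤ l → l ≤ b - 1 → |t l| ≤ Real.cos (π*δ) / (2 * Real.sin (π*δ)) := by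
    intro l h1 h2
    obtain ⟨u, v⟩ := hrangeφ l h1 h2
    rw [ht]
    simp only
    rw [abs_div, abs_neg]
    have h3 := hsφ l h1 h2
    rw [abs_of_pos (by linarith : (0:ℝ) < 2 * Real.sin (π * φ l))]
    apply div_le_div₀ (by positivity) (cos_ub hδ0 hδ1 u v) (by positivity)
    linarith
  have htmono : ∀ l : ℤ, a + 1 ≤ l → l ≤ b - 1 → t (l-1) ≤ t l := by
    intro l h1 h2
    obtain ⟨u1, v1⟩ := hrangeφ (l-1) (by omega) (by omega)
    obtain ⟨u2, v2⟩ := hrangeφ l (by omega) h2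
    have key := neg_cot_mono (x := π * φ (l-1)) (y := π * φ l) (by nlinarith)
      (by nlinarith [hφmono l h1 h2]) (by nlinarith)
    rw [ht]
    simp only
    rw [div_le_div_iff₀ (by nlinarith [hsφ (l-1) (by omega : a ≤ l - 1) (by omega : l - 1 ≤ b - 1)]) (by nlinarith [hsφ l (by omega : a ≤ l) h2])] at key ⊢
    nlinarith
  -- Abel summation
  set F : ℤ → ℂ := fun l => ee (f l) with hF
  have hstep : ∀ l : ℤ, a ≤ l → l ≤ b - 1 → F l = (F (l+1) - F l) * W l := by
    intro l h1 h2
    have hsin : Real.sin (π * φ l) ≠ 0 := by linarith [hsφ l h1 h2, hsδ]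
    have hne := ee_ne_one hsin
    have he : F (l+1) = F l * (ee (φ l)) := by
      rw [hF]
      simp only
      rw [show f ((l:ℤ)+1:ℤ) = f l + (φ l + (m:ℝ)) by push_cast [hφdef]; ring_nf]
      rw [ee_add, ee_add, ee_int]
      ring
    rw [hW]
    simp only
    rw [he]
    field_simp
  have habel : ∑ l ∈ Finset.Icc a b, F l
      = F b + (F b * W (b-1) - F a * W a
        + ∑ l ∈ Finset.Icc (a+1) (b-1), F l * (W (l-1) - W l)) := by
    have h1 : ∑ l ∈ Finset.Icc a b, F l = (∑ l ∈ Finset.Icc a (b-1), F l) + F b := by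
      rw [split_sum a b (b-1) (by omega) (by omega)]
      congr 1
      rw [show b - 1 + 1 = b by ring, Finset.Icc_self, Finset.sum_singleton]
    have h2 : ∑ l ∈ Finset.Icc a (b-1), F l = ∑ l ∈ Finset.Icc a (b-1), (F (l+1) - F l) * W l := by
      apply Finset.sum_congr rfl
      intro l hl
      rw [Finset.mem_Icc] at hl
      exact hstep l hl.1 hl.2
    have h3 : ∑ l ∈ Finset.Icc a (b-1), (F (l+1) - F l) * W l
        = (∑ l ∈ Finset.Icc a (b-1), F (l+1) * W l) - ∑ l ∈ Finset.Icc a (b-1), F l * W l := by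
      rw [← Finset.sum_sub_distrib]; apply Finset.sum_congr rfl; intros; ring
    have h4 : ∑ l ∈ Finset.Icc a (b-1), F (l+1) * W l = ∑ l ∈ Finset.Icc (a+1) b, F l * W (l-1) := by
      rw [sum_shift (fun l => F l * W (l-1)) a b]
      apply Finset.sum_congr rfl; intro l hl; simp
    have h5 : ∑ l ∈ Finset.Icc (a+1) b, F l * W (l-1)
        = (∑ l ∈ Finset.Icc (a+1) (b-1), F l * W (l-1)) + F b * W (b-1) := by
      rw [split_sum (a+1) b (b-1) (by omega) (by omega)]
      congr 1
      rw [show b - 1 + 1 = b by ring, Finset.Icc_self, Finset.sum_singleton]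
    have h6 : ∑ l ∈ Finset.Icc a (b-1), F l * W l
        = F a * W a + ∑ l ∈ Finset.Icc (a+1) (b-1), F l * W l := by
      rw [split_sum a (b-1) a (by omega) (by omega), Finset.Icc_self, Finset.sum_singleton]
    have h7 : ∑ l ∈ Finset.Icc (a+1) (b-1), F l * (W (l-1) - W l)
        = ∑ l ∈ Finset.Icc (a+1) (b-1), (F l * W (l-1) - F l * W l) := by
      apply Finset.sum_congr rfl; intros; ring
    rw [h1, h2, h3, h4, h5, h6, h7, Finset.sum_sub_distrib]
    ring
  rw [show (∑ l ∈ Finset.Icc a b, ee (f (l:ℤ))) = ∑ l ∈ Finset.Icc a b, F l from rfl, habel]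
  -- bound each piece
  have habsF : ∀ l : ℤ, ‖F l‖ = 1 := fun l => abs_ee _
  have hWb := hWabs (b-1) (by omega) (by omega)
  have hWa := hWabs a (by omega) (by omega)
  have hC : ‖∑ l ∈ Finset.Icc (a+1) (b-1), F l * (W (l-1) - W l)‖
      ≤ Real.cos (π*δ) / Real.sin (π*δ) := by
    calc ‖∑ l ∈ Finset.Icc (a+1) (b-1), F l * (W (l-1) - W l)‖
        ≤ ∑ l ∈ Finset.Icc (a+1) (b-1), ‖F l * (W (l-1) - W l)‖ := by
          exact norm_sum_le _ _
      _ = ∑ l ∈ Finset.Icc (a+1) (b-1), (t l - t (l-1)) := by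
          apply Finset.sum_congr rfl
          intro l hl
          rw [Finset.mem_Icc] at hl
          rw [norm_mul, habsF, one_mul, hWval (l-1) (by omega) (by omega), hWval l (by omega) hl.2]
          rw [show (-1/2 + ((t (l-1) : ℝ) : ℂ) * Complex.I) - (-1/2 + ((t l : ℝ) : ℂ) * Complex.I)
            = (((t (l-1) - t l : ℝ)) : ℂ) * Complex.I by push_cast; ring]
          rw [norm_mul, Complex.norm_I, mul_one, Complex.norm_real, Real.norm_eq_abs]
          rw [abs_of_nonpos (by linarith [htmono l hl.1 hl.2])]
          ring
      _ = t (b-1) - t a := sum_telescope_Icc t a (b-1) (by omega)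
      _ ≤ |t (b-1)| + |t a| := by
          have := abs_le.mp (le_refl |t (b-1)|)
          have h1 := le_abs_self (t (b-1))
          have h2 := neg_abs_le (t a)
          linarith
      _ ≤ Real.cos (π*δ) / Real.sin (π*δ) := by
          have h1 := htabs (b-1) (by omega) (by omega)
          have h2 := htabs a (by omega) (by omega)
          have : Real.cos (π*δ) / (2 * Real.sin (π*δ)) + Real.cos (π*δ) / (2 * Real.sin (π*δ))
              = Real.cos (π*δ) / Real.sin (π*δ) := by field_simp; ring
          linarith
  have key : ‖F b + (F b * W (b-1) - F a * W a
      + ∑ l ∈ Finset.Icc (a+1) (b-1), F l * (W (l-1) - W l))‖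
      ≤ 1 + (1 / (2 * Real.sin (π*δ)) + 1 / (2 * Real.sin (π*δ))
        + Real.cos (π*δ) / Real.sin (π*δ)) := by
    set C := ∑ l ∈ Finset.Icc (a+1) (b-1), F l * (W (l-1) - W l) with hc
    calc ‖F b + (F b * W (b-1) - F a * W a + C)‖
        ≤ ‖F b‖ + ‖F b * W (b-1) - F a * W a + C‖ := norm_add_le _ _
      _ ≤ ‖F b‖ + (‖F b * W (b-1) - F a * W a‖ + ‖C‖) := by
          linarith [norm_add_le (F b * W (b-1) - F a * W a) C]
      _ ≤ ‖F b‖ + (‖F b * W (b-1)‖ + ‖F a * W a‖ + ‖C‖) := by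
          have h := norm_add_le (F b * W (b-1)) (-(F a * W a))
          rw [norm_neg] at h
          rw [sub_eq_add_neg]
          linarith
      _ ≤ 1 + (1 / (2 * Real.sin (π*δ)) + 1 / (2 * Real.sin (π*δ)) + Real.cos (π*δ) / Real.sin (π*δ)) := by
          rw [habsF, norm_mul, norm_mul, habsF, habsF, one_mul, one_mul]
          linarith [hC]
  have heq : 1 / (2 * Real.sin (π*δ)) + 1 / (2 * Real.sin (π*δ)) + Real.cos (π*δ) / Real.sin (π*δ)
      = (1 + Real.cos (π*δ)) / Real.sin (π*δ) := by field_simp; ring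
  rw [heq] at key
  exact key
lemma mono_from_deriv (a b : ℝ) (f' f'' : ℝ → ℝ)
    (hd2 : ∀ x ∈ Set.Icc a b, HasDerivAt f' (f'' x) x)
    (hpos : ∀ x ∈ Set.Icc a b, 0 ≤ f'' x) : MonotoneOn f' (Set.Icc a b) := by
  apply monotoneOn_of_deriv_nonneg (convex_Icc a b)
    (fun x hx => (hd2 x hx).continuousAt.continuousWithinAt)
  · intro x hx
    rw [interior_Icc] at hx
    exact ((hd2 x (Set.mem_Icc_of_Ioo hx)).differentiableAt).differentiableWithinAt
  · intro x hx
    rw [interior_Icc] at hx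
    rw [(hd2 x (Set.mem_Icc_of_Ioo hx)).deriv]
    exact hpos x (Set.mem_Icc_of_Ioo hx)

lemma triv_bound (u v : ℤ) (g : ℤ → ℝ) (h : u - 1 ≤ v) :
    ‖∑ l ∈ Finset.Icc u v, ee (g l)‖ ≤ (v : ℝ) + 1 - u := by
  calc ‖∑ l ∈ Finset.Icc u v, ee (g l)‖
      ≤ ∑ l ∈ Finset.Icc u v, ‖ee (g l)‖ := norm_sum_le _ _
    _ = ((Finset.Icc u v).card : ℝ) := by
        rw [Finset.sum_congr rfl (fun l _ => abs_ee (g l)), Finset.sum_const, nsmul_eq_mul, mul_one]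
    _ = (((v + 1 - u).toNat : ℤ) : ℝ) := by rw [Int.card_Icc]; norm_cast
    _ ≤ (v : ℝ) + 1 - u := by
        have : ((v + 1 - u).toNat : ℤ) = v + 1 - u := by omega
        rw [this]; push_cast; linarith

lemma single_block (a b : ℤ) (hab : a ≤ b) (f f' f'' : ℝ → ℝ) (ρ : ℝ) (hρ : 0 < ρ)
    (hd1 : ∀ x ∈ Set.Icc (a:ℝ) b, HasDerivAt f (f' x) x)
    (hd2 : ∀ x ∈ Set.Icc (a:ℝ) b, HasDerivAt f' (f'' x) x)
    (hlow : ∀ x ∈ Set.Icc (a:ℝ) b, ρ ≤ f'' x)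
    (k : ℤ) (hk : ∀ x ∈ Set.Icc (a:ℝ) b, (k:ℝ) - 1/2 ≤ f' x ∧ f' x ≤ (k:ℝ) + 1/2) :
    ‖∑ l ∈ Finset.Icc a b, ee (f l)‖ ≤ 4 / Real.sqrt ρ + 3 := by
  classical
  have hπ := Real.pi_pos
  have hsqrt : 0 < Real.sqrt ρ := Real.sqrt_pos.mpr hρ
  have h4pos : 0 ≤ 4 / Real.sqrt ρ := by positivity
  have memZ : ∀ l : ℤ, a ≤ l → l ≤ b → ((l:ℝ)) ∈ Set.Icc (a:ℝ) b := by
    intro l h1 h2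
    constructor <;> [exact_mod_cast h1; exact_mod_cast h2]
  have hmono : MonotoneOn f' (Set.Icc (a:ℝ) b) :=
    mono_from_deriv _ _ f' f'' hd2 (fun x hx => le_of_lt (lt_of_lt_of_le hρ (hlow x hx)))
  have monoZ : ∀ l l' : ℤ, a ≤ l → l ≤ l' → l' ≤ b → f' l ≤ f' l' := by
    intro l l' h1 h2 h3
    exact hmono (memZ l h1 (le_trans h2 h3)) (memZ l' (le_trans h1 h2) h3) (by exact_mod_cast h2)
  have mvt : ∀ u v : ℤ, a ≤ u → u < v → v ≤ b → ρ * ((v:ℝ) - u) ≤ f' v - f' u := by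
    intro u v h1 h2 h3
    have huv : (u:ℝ) < v := by exact_mod_cast h2
    have hsub : Set.Icc (u:ℝ) v ⊆ Set.Icc (a:ℝ) b :=
      Set.Icc_subset_Icc (by exact_mod_cast h1) (by exact_mod_cast h3)
    obtain ⟨ξ, hξ, he⟩ := exists_hasDerivAt_eq_slope f' f'' huv
      (fun x hx => (hd2 x (hsub hx)).continuousAt.continuousWithinAt)
      (fun x hx => hd2 x (hsub (Set.mem_Icc_of_Ioo hx)))
    have hξm : ξ ∈ Set.Icc (a:ℝ) b := hsub (Set.mem_Icc_of_Ioo hξ)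
    have := hlow ξ hξm
    rw [he] at this
    rw [le_div_iff₀ (by linarith : (0:ℝ) < (v:ℝ) - u)] at this
    linarith [this]
  rcases le_or_gt 1 ρ with hρ1 | hρ1
  · -- ρ ≥ 1 : at most two points
    have hble : b ≤ a + 1 := by
      by_contra hc
      push_neg at hc
      have h1 := mvt a b le_rfl (by omega) le_rfl
      have h2 := (hk (a:ℝ) (memZ a le_rfl hab)).1
      have h3 := (hk (b:ℝ) (memZ b hab le_rfl)).2
      have hba : (2:ℝ) ≤ (b:ℝ) - a := by
        have : a + 2 ≤ b := by omega
        have := (by exact_mod_cast this : (a:ℝ) + 2 ≤ b)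
        linarith
      nlinarith
    have := triv_bound a b (fun l => f l) (by omega)
    have hble' : (b:ℝ) ≤ (a:ℝ) + 1 := by exact_mod_cast hble
    calc ‖∑ l ∈ Finset.Icc a b, ee (f l)‖ ≤ (b:ℝ) + 1 - a := this
      _ ≤ 2 := by linarith
      _ ≤ 4 / Real.sqrt ρ + 3 := by linarith
  · -- ρ < 1
    set δ : ℝ := Real.sqrt ρ / 2 with hδdef
    have hδ0 : 0 < δ := by positivity
    have hδhalf : δ ≤ 1/2 := by
      have : Real.sqrt ρ ≤ 1 := by
        rw [show (1:ℝ) = Real.sqrt 1 by simp]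
        exact Real.sqrt_le_sqrt (le_of_lt hρ1)
      rw [hδdef]; linarith
    have hsq : Real.sqrt ρ * Real.sqrt ρ = ρ := Real.mul_self_sqrt (le_of_lt hρ)
    -- split 1
    obtain ⟨c₁, hc₁l, hc₁r, hP₁, hnP₁⟩ := split_run a b (by omega) (fun l => f' l < (k:ℝ) - δ)
      (fun l l' h1 h2 h3 hP => lt_of_le_of_lt (monoZ l l' h1 h2 h3) hP)
    obtain ⟨c₂, hc₂l, hc₂r, hP₂, hnP₂⟩ := split_run (c₁+1) b (by omega) (fun l => f' l ≤ (k:ℝ) + δ)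
      (fun l l' h1 h2 h3 hP => le_trans (monoZ l l' (by omega) h2 h3) hP)
    have hsplit : ∑ l ∈ Finset.Icc a b, ee (f l)
        = (∑ l ∈ Finset.Icc a c₁, ee (f l)) + ((∑ l ∈ Finset.Icc (c₁+1) c₂, ee (f l))
          + ∑ l ∈ Finset.Icc (c₂+1) b, ee (f l)) := by
      rw [split_sum a b c₁ hc₁l hc₁r, split_sum (c₁+1) b c₂ (by omega) hc₂r]
    -- KL bound quantity
    have hKL : (1:ℝ) + (1 + Real.cos (π*δ)) / Real.sin (π*δ) ≤ 1 + 4 / (π * Real.sqrt ρ) := by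
      have := cot_half_bound hδ0 hδhalf
      have heq : 2 / (π * δ) = 4 / (π * Real.sqrt ρ) := by
        rw [hδdef]; field_simp; ring
      linarith [this, heq.symm.le]
    -- piece 1
    have hS1 : ‖∑ l ∈ Finset.Icc a c₁, ee (f l)‖ ≤ 1 + 4 / (π * Real.sqrt ρ) := by
      rcases lt_or_ge c₁ a with h | h
      · have : Finset.Icc a c₁ = ∅ := Finset.Icc_eq_empty (by omega)
        rw [this, Finset.sum_empty, norm_zero]
        positivity
      · have hc₁b : (c₁ : ℝ) ≤ b := by exact_mod_cast hc₁r
        have hsub : Set.Icc (a:ℝ) c₁ ⊆ Set.Icc (a:ℝ) b := Set.Icc_subset_Icc le_rfl hc₁b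
        have hfc₁ : f' c₁ < (k:ℝ) - δ := hP₁ c₁ h le_rfl
        refine le_trans (kusminLandau a c₁ h f f' δ hδ0 hδhalf
          (fun x hx => hd1 x (hsub hx)) (hmono.mono hsub) (k-1) ?_) hKL
        intro x hx
        have hxm : x ∈ Set.Icc (a:ℝ) b := hsub hx
        have h1 := (hk x hxm).1
        have h2 : f' x ≤ f' c₁ := hmono hxm (memZ c₁ h hc₁r) hx.2
        constructor
        · push_cast; linarith
        · push_cast; linarith
    -- piece 3
    have hS3 : ‖∑ l ∈ Finset.Icc (c₂+1) b, ee (f l)‖ ≤ 1 + 4 / (π * Real.sqrt ρ) := by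
      rcases lt_or_ge b (c₂+1) with h | h
      · have : Finset.Icc (c₂+1) b = ∅ := Finset.Icc_eq_empty (by omega)
        rw [this, Finset.sum_empty, norm_zero]
        positivity
      · have hc₂a : a ≤ c₂ + 1 := by omega
        have hsub : Set.Icc ((c₂+1 : ℤ) : ℝ) b ⊆ Set.Icc (a:ℝ) b :=
          Set.Icc_subset_Icc (by exact_mod_cast hc₂a) le_rfl
        have hfc₂ : ¬ (f' ((c₂+1 : ℤ)) ≤ (k:ℝ) + δ) := hnP₂ (c₂+1) (by omega) h
        push_neg at hfc₂
        refine le_trans (kusminLandau (c₂+1) b h f f' δ hδ0 hδhalf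
          (fun x hx => hd1 x (hsub hx)) (hmono.mono hsub) k ?_) hKL
        intro x hx
        have hxm : x ∈ Set.Icc (a:ℝ) b := hsub hx
        have h1 := (hk x hxm).2
        have h2 : f' ((c₂+1:ℤ) : ℝ) ≤ f' x := hmono (memZ (c₂+1) hc₂a h) hxm hx.1
        constructor
        · linarith
        · linarith
    -- piece 2
    have hS2 : ‖∑ l ∈ Finset.Icc (c₁+1) c₂, ee (f l)‖ ≤ 1 / Real.sqrt ρ + 1 := by
      rcases lt_or_ge c₂ (c₁+1) with h | h
      · have : Finset.Icc (c₁+1) c₂ = ∅ := Finset.Icc_eq_empty (by omega)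
        rw [this, Finset.sum_empty, norm_zero]
        positivity
      · have hcount : (c₂ : ℝ) - (c₁ + 1) ≤ 1 / Real.sqrt ρ := by
          rcases eq_or_lt_of_le h with heq | hlt2
          · rw [← heq]; push_cast
            rw [show (c₁:ℝ) + 1 - ((c₁:ℝ) + 1) = 0 by ring]
            positivity
          · have h1 := mvt (c₁+1) c₂ (by omega) hlt2 hc₂r
            have h2 : (k:ℝ) - δ ≤ f' ((c₁+1:ℤ):ℝ) := by
              have := hnP₁ (c₁+1) (by omega) (by omega)
              push_neg at this
              exact this
            have h3 : f' ((c₂:ℤ):ℝ) ≤ (k:ℝ) + δ := hP₂ c₂ h le_rfl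
            have h5 : ρ * ((c₂:ℝ) - ((c₁:ℝ)+1)) ≤ Real.sqrt ρ := by
              rw [hδdef] at h2 h3
              push_cast at h1 h2 h3
              linarith
            rw [le_div_iff₀ hsqrt]
            nlinarith [h5, hsq, hsqrt]
        calc ‖∑ l ∈ Finset.Icc (c₁+1) c₂, ee (f l)‖ ≤ (c₂:ℝ) + 1 - ((c₁+1:ℤ):ℝ) :=
              triv_bound _ _ _ (by omega)
          _ ≤ 1 / Real.sqrt ρ + 1 := by push_cast at hcount ⊢; linarith
    -- combine
    rw [hsplit]
    have tri1 := norm_add_le (∑ l ∈ Finset.Icc a c₁, ee (f l))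
      ((∑ l ∈ Finset.Icc (c₁+1) c₂, ee (f l)) + ∑ l ∈ Finset.Icc (c₂+1) b, ee (f l))
    have tri2 := norm_add_le (∑ l ∈ Finset.Icc (c₁+1) c₂, ee (f l))
      (∑ l ∈ Finset.Icc (c₂+1) b, ee (f l))
    have hfinal : (1 + 4 / (π * Real.sqrt ρ)) + ((1 / Real.sqrt ρ + 1) + (1 + 4 / (π * Real.sqrt ρ)))
        ≤ 4 / Real.sqrt ρ + 3 := by
      have hπ3 : (3:ℝ) < π := Real.pi_gt_three
      have key : 8 / (π * Real.sqrt ρ) ≤ 3 / Real.sqrt ρ := by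
        rw [div_le_div_iff₀ (by positivity) (by positivity)]
        nlinarith
      have heq : 3 / Real.sqrt ρ + 1 / Real.sqrt ρ = 4 / Real.sqrt ρ := by
        field_simp; norm_num
      have heq2 : 4 / (π * Real.sqrt ρ) + 4 / (π * Real.sqrt ρ) = 8 / (π * Real.sqrt ρ) := by
        field_simp; norm_num
      linarith
    linarith
lemma main_pos (f f' f'' : ℝ → ℝ) (ρ : ℝ) (hρ : 0 < ρ) : ∀ n : ℕ, ∀ a b : ℤ, a ≤ b →
    (b - a).toNat ≤ n →
    (∀ x ∈ Set.Icc (a:ℝ) b, HasDerivAt f (f' x) x) →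
    (∀ x ∈ Set.Icc (a:ℝ) b, HasDerivAt f' (f'' x) x) →
    (∀ x ∈ Set.Icc (a:ℝ) b, ρ ≤ f'' x) →
    ‖∑ l ∈ Finset.Icc a b, ee (f l)‖ ≤
      (((⌊f' b + 1/2⌋ : ℤ) : ℝ) - ((⌊f' a + 1/2⌋ : ℤ) : ℝ) + 1) * (4 / Real.sqrt ρ + 3) := by
  classical
  intro n
  induction n with
  | zero =>
    intro a b hab hn hd1 hd2 hlow
    have : a = b := by omega
    subst this
    rw [Finset.Icc_self, Finset.sum_singleton]
    have h1 : ‖ee (f a)‖ = 1 := by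
      rw [ee, Complex.norm_exp]; simp [Complex.mul_re, Complex.mul_im]
    rw [h1, show ((⌊f' ↑a + 1/2⌋:ℤ):ℝ) - ((⌊f' ↑a + 1/2⌋:ℤ):ℝ) + 1 = 1 by ring, one_mul]
    have : (0:ℝ) ≤ 4 / Real.sqrt ρ := by positivity
    linarith
  | succ n ih =>
    intro a b hab hn hd1 hd2 hlow
    have hsqrt : 0 < Real.sqrt ρ := Real.sqrt_pos.mpr hρ
    have hB : (0:ℝ) < 4 / Real.sqrt ρ + 3 := by positivity
    set B := 4 / Real.sqrt ρ + 3 with hBdef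
    set k : ℤ := ⌊f' a + 1/2⌋ with hkdef
    have memZ : ∀ l : ℤ, a ≤ l → l ≤ b → ((l:ℝ)) ∈ Set.Icc (a:ℝ) b := by
      intro l h1 h2
      constructor <;> [exact_mod_cast h1; exact_mod_cast h2]
    have hmono : MonotoneOn f' (Set.Icc (a:ℝ) b) :=
      mono_from_deriv _ _ f' f'' hd2 (fun x hx => le_of_lt (lt_of_lt_of_le hρ (hlow x hx)))
    have monoZ : ∀ l l' : ℤ, a ≤ l → l ≤ l' → l' ≤ b → f' l ≤ f' l' := by
      intro l l' h1 h2 h3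
      exact hmono (memZ l h1 (le_trans h2 h3)) (memZ l' (le_trans h1 h2) h3) (by exact_mod_cast h2)
    obtain ⟨c, hcl, hcr, hP, hnP⟩ := split_run a b (by omega) (fun l => f' l ≤ (k:ℝ) + 1/2)
      (fun l l' h1 h2 h3 hP => le_trans (monoZ l l' h1 h2 h3) hP)
    have hfa_lb : (k:ℝ) ≤ f' a + 1/2 := Int.floor_le _
    have hfa_ub : f' a + 1/2 < (k:ℝ) + 1 := Int.lt_floor_add_one _
    have hac : a ≤ c := by
      by_contra hcon
      push_neg at hcon
      exact hnP a (by omega) hab (by linarith)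
    -- single block on [a, c]
    have hsubc : Set.Icc (a:ℝ) c ⊆ Set.Icc (a:ℝ) b :=
      Set.Icc_subset_Icc le_rfl (by exact_mod_cast hcr)
    have hS1 : ‖∑ l ∈ Finset.Icc a c, ee (f l)‖ ≤ B := by
      rw [hBdef]
      apply single_block a c hac f f' f'' ρ hρ (fun x hx => hd1 x (hsubc hx))
        (fun x hx => hd2 x (hsubc hx)) (fun x hx => hlow x (hsubc hx)) k
      intro x hx
      have hxm := hsubc hx
      constructor
      · have : f' a ≤ f' x := hmono (memZ a le_rfl hab) hxm hx.1
        linarith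
      · have : f' x ≤ f' ((c:ℤ):ℝ) := hmono hxm (memZ c hac hcr) hx.2
        have hc := hP c hac le_rfl
        linarith
    -- coefficient facts
    have hkb : k ≤ ⌊f' b + 1/2⌋ := by
      apply Int.floor_le_floor
      have := monoZ a b le_rfl hab le_rfl
      linarith
    rcases eq_or_lt_of_le hcr with heq | hcb
    · -- c = b
      subst heq
      refine le_trans hS1 ?_
      have h1 : (1:ℝ) ≤ ((⌊f' c + 1/2⌋ : ℤ) : ℝ) - ((k:ℤ) : ℝ) + 1 := by
        have : ((k:ℤ):ℝ) ≤ ((⌊f' c + 1/2⌋ : ℤ) : ℝ) := by exact_mod_cast hkb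
        linarith
      have h2 := mul_le_mul_of_nonneg_right h1 (le_of_lt hB)
      rw [one_mul] at h2
      exact h2
    · -- c < b, recurse on [c+1, b]
      have hsub2 : Set.Icc ((c+1:ℤ):ℝ) b ⊆ Set.Icc (a:ℝ) b :=
        Set.Icc_subset_Icc (by exact_mod_cast (by omega : a ≤ c+1)) le_rfl
      have hrec := ih (c+1) b (by omega) (by omega)
        (fun x hx => hd1 x (hsub2 hx)) (fun x hx => hd2 x (hsub2 hx))
        (fun x hx => hlow x (hsub2 hx))
      have hkc : k + 1 ≤ ⌊f' ((c+1:ℤ):ℝ) + 1/2⌋ := by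
        have h1 : ¬ (f' ((c+1:ℤ):ℝ) ≤ (k:ℝ) + 1/2) := hnP (c+1) (by omega) (by omega)
        push_neg at h1
        rw [Int.le_floor]
        push_cast at h1 ⊢
        linarith
      have hsplit := split_sum a b c (by omega) (by omega) (fun l => ee (f l))
      rw [hsplit]
      have tri := norm_add_le (∑ l ∈ Finset.Icc a c, ee (f l))
        (∑ l ∈ Finset.Icc (c+1) b, ee (f l))
      have hcoef : ((⌊f' b + 1/2⌋ : ℤ) : ℝ) - ((⌊f' ((c+1:ℤ):ℝ) + 1/2⌋ : ℤ) : ℝ) + 1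
          ≤ ((⌊f' b + 1/2⌋ : ℤ) : ℝ) - ((k:ℤ):ℝ) := by
        have : ((k:ℤ):ℝ) + 1 ≤ ((⌊f' ((c+1:ℤ):ℝ) + 1/2⌋ : ℤ) : ℝ) := by exact_mod_cast hkc
        linarith
      have hrec2 : ‖∑ l ∈ Finset.Icc (c+1) b, ee (f l)‖
          ≤ (((⌊f' b + 1/2⌋ : ℤ) : ℝ) - ((k:ℤ):ℝ)) * B := by
        refine le_trans hrec ?_
        apply mul_le_mul_of_nonneg_right hcoef (le_of_lt hB)
      calc ‖(∑ l ∈ Finset.Icc a c, ee (f l)) + ∑ l ∈ Finset.Icc (c+1) b, ee (f l)‖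
          ≤ ‖∑ l ∈ Finset.Icc a c, ee (f l)‖
            + ‖∑ l ∈ Finset.Icc (c+1) b, ee (f l)‖ := tri
        _ ≤ B + (((⌊f' b + 1/2⌋ : ℤ) : ℝ) - ((k:ℤ):ℝ)) * B := add_le_add hS1 hrec2
        _ = (((⌊f' b + 1/2⌋ : ℤ) : ℝ) - ((k:ℤ):ℝ) + 1) * B := by ring

/-- van der Corput second derivative exponential sum bound -/
theorem stmt2 (a b : ℤ) (hab : a < b) (f f' f'' : ℝ → ℝ) (ρ : ℝ) (hρ : 0 < ρ)
    (hd1 : ∀ x ∈ Set.Icc (a : ℝ) b, HasDerivAt f (f' x) x)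
    (hd2 : ∀ x ∈ Set.Icc (a : ℝ) b, HasDerivAt f' (f'' x) x)
    (hlow : ∀ x ∈ Set.Icc (a : ℝ) b, ρ ≤ |f'' x|)
    (hsign : (∀ x ∈ Set.Icc (a : ℝ) b, 0 < f'' x) ∨ (∀ x ∈ Set.Icc (a : ℝ) b, f'' x < 0)) :
    ‖∑ l ∈ Finset.Icc a b, Complex.exp (2 * (π : ℂ) * Complex.I * (f l : ℂ))‖ ≤
      (|f' b - f' a| + 2) * (4 / Real.sqrt ρ + 3) := by
  have hab' : a ≤ b := le_of_lt hab
  have habR : (a:ℝ) ≤ (b:ℝ) := by exact_mod_cast hab'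
  have key : ∀ g g' g'' : ℝ → ℝ,
      (∀ x ∈ Set.Icc (a : ℝ) b, HasDerivAt g (g' x) x) →
      (∀ x ∈ Set.Icc (a : ℝ) b, HasDerivAt g' (g'' x) x) →
      (∀ x ∈ Set.Icc (a : ℝ) b, ρ ≤ g'' x) →
      ‖∑ l ∈ Finset.Icc a b, ee (g l)‖ ≤ (|g' b - g' a| + 2) * (4 / Real.sqrt ρ + 3) := by
    intro g g' g'' hg1 hg2 hglow
    have h := main_pos g g' g'' ρ hρ (b-a).toNat a b hab' (le_refl _) hg1 hg2 hglow
    refine le_trans h ?_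
    have hBpos : (0:ℝ) ≤ 4 / Real.sqrt ρ + 3 := by positivity
    apply mul_le_mul_of_nonneg_right _ hBpos
    have hmono : MonotoneOn g' (Set.Icc (a:ℝ) b) :=
      mono_from_deriv _ _ g' g'' hg2 (fun x hx => le_of_lt (lt_of_lt_of_le hρ (hglow x hx)))
    have hfb : g' a ≤ g' b := hmono (Set.left_mem_Icc.mpr habR) (Set.right_mem_Icc.mpr habR) habR
    rw [abs_of_nonneg (by linarith : (0:ℝ) ≤ g' b - g' a)]
    have l1 : ((⌊g' (b:ℝ) + 1/2⌋:ℤ):ℝ) ≤ g' b + 1/2 := Int.floor_le _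
    have l2 : g' a + 1/2 < ((⌊g' (a:ℝ) + 1/2⌋:ℤ):ℝ) + 1 := Int.lt_floor_add_one _
    linarith
  rcases hsign with hpos | hneg
  · have hlow' : ∀ x ∈ Set.Icc (a:ℝ) b, ρ ≤ f'' x := by
      intro x hx
      have := hlow x hx
      rwa [abs_of_pos (hpos x hx)] at this
    exact key f f' f'' hd1 hd2 hlow'
  · have hlow' : ∀ x ∈ Set.Icc (a:ℝ) b, ρ ≤ -f'' x := by
      intro x hx
      have := hlow x hx
      rwa [abs_of_neg (hneg x hx)] at this
    have conj_eq : (∑ l ∈ Finset.Icc a b, ee (f l))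
        = starRingEnd ℂ (∑ l ∈ Finset.Icc a b, ee (-f l)) := by
      rw [map_sum]
      apply Finset.sum_congr rfl
      intro l _
      rw [ee, ee, ← Complex.exp_conj]
      congr 1
      simp only [map_mul, Complex.conj_I, Complex.conj_ofReal, map_ofNat]
      push_cast
      ring
    have habs : ‖∑ l ∈ Finset.Icc a b, ee (f l)‖
        = ‖∑ l ∈ Finset.Icc a b, ee (-f l)‖ := by
      rw [conj_eq, Complex.norm_conj]
    have hres := key (fun x => -f x) (fun x => -f' x) (fun x => -f'' x)
      (fun x hx => (hd1 x hx).neg) (fun x hx => (hd2 x hx).neg) hlow'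
    rw [show |-f' (b:ℝ) - -f' (a:ℝ)| = |f' b - f' a| by rw [show -f' (b:ℝ) - -f' (a:ℝ) = -(f' b - f' a) by ring, abs_neg]] at hres
    calc ‖∑ l ∈ Finset.Icc a b, ee (f l)‖
        = ‖∑ l ∈ Finset.Icc a b, ee (-f l)‖ := habs
      _ ≤ (|f' b - f' a| + 2) * (4 / Real.sqrt ρ + 3) := hres
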